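/- Let K ⊂ ℂ be a quartic CM field (a degree-4 totally imaginary number field stable under complex conjugation), let p be a prime number, and let π ∈ O_K be a Weil p-number with ℚ(π) = K; let π̄ denote the complex conjugate of π, so that π·π̄ = p. If π̄ ∉ ℤ[π], then the index of ℤ[π] in ℤ[π, π̄], as additive abelian groups, equals p. -/

import Mathlib

open Polynomial

lemma real_hom_aux (K : IntermediateField ℚ ℂ) (h : ∀ x : K, (x : ℂ).im = 0) :
    Nonempty (K →+* ℝ) :=
  ⟨{ toFun := fun x => (x : ℂ).re
     map_one' := by simp
     map_mul' := fun x y => by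
       have hx := h x; have hy := h y
       show ((x * y : K) : ℂ).re = _
       push_cast
       rw [Complex.mul_re, hx, hy]; ring
     map_zero' := by simp
     map_add' := fun x y => by
       show ((x + y : K) : ℂ).re = _
       push_cast
       rw [Complex.add_re] }⟩

/-- The reals as an intermediate field of `ℚ ⊆ ℂ`. -/
noncomputable def realIF : IntermediateField ℚ ℂ :=
  { Complex.ofRealHom.fieldRange with
    algebraMap_mem' := fun r => ⟨(r : ℝ), by simp⟩ }

lemma mem_realIF {z : ℂ} (hz : z.im = 0) : z ∈ realIF :=
  ⟨z.re, Complex.ext (by simp) (by simp [hz])⟩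

lemma im_eq_zero_of_mem_realIF {z : ℂ} (hz : z ∈ realIF) : z.im = 0 := by
  obtain ⟨r, rfl⟩ := hz; simp

/-- Let `K ⊂ ℂ` be a quartic CM field (degree 4, totally imaginary, stable under
complex conjugation), `p` a prime, and `π ∈ O_K` a Weil `p`-number with `ℚ(π) = K`; let `π̄` be
its complex conjugate, so `π·π̄ = p`. If `π̄ ∉ ℤ[π]`, then the index of `ℤ[π]` in `ℤ[π, π̄]`
as additive abelian groups equals `p`. -/
theorem stmt0 (K : IntermediateField ℚ ℂ)
    (hdeg : Module.finrank ℚ K = 4)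
    (himag : IsEmpty (K →+* ℝ))
    (hstable : ∀ x ∈ K, (starRingEnd ℂ) x ∈ K)
    (p : ℕ) (hp : p.Prime)
    (π : ℂ) (hπK : π ∈ K)
    (hint : IsIntegral ℤ π)
    (hweil : ∀ φ : K →+* ℂ, ‖φ ⟨π, hπK⟩‖ = Real.sqrt p)
    (hgen : IntermediateField.adjoin ℚ {π} = K)
    (hnorm : π * (starRingEnd ℂ) π = (p : ℂ))
    (hnotin : (starRingEnd ℂ) π ∉ Algebra.adjoin ℤ ({π} : Set ℂ)) :
    AddSubgroup.relIndex
        (Algebra.adjoin ℤ ({π} : Set ℂ)).toSubring.toAddSubgroup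
        (Algebra.adjoin ℤ ({π, (starRingEnd ℂ) π} : Set ℂ)).toSubring.toAddSubgroup = p := by
  subst hgen
  have hp0 : (p : ℂ) ≠ 0 := Nat.cast_ne_zero.mpr hp.ne_zero
  have hπ0 : π ≠ 0 := by
    intro h; rw [h, zero_mul] at hnorm; exact hp0 hnorm.symm
  have hintQ : IsIntegral ℚ π := hint.tower_top
  haveI : FiniteDimensional ℚ (IntermediateField.adjoin ℚ {π}) :=
    IntermediateField.adjoin.finiteDimensional hintQ
  have hmindeg : (minpoly ℚ π).natDegree = 4 := by
    rw [← IntermediateField.adjoin.finrank hintQ]; exact hdeg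
  -- Step 1: the constant coefficient of the minimal polynomial of `π` over `ℤ` is `± p²`.
  have hc : ((minpoly ℤ π).coeff 0 : ℚ) = (p:ℚ)^2 ∨ ((minpoly ℤ π).coeff 0 : ℚ) = -(p:ℚ)^2 := by
    set πK : IntermediateField.adjoin ℚ {π} := ⟨π, hπK⟩ with hπKdef
    set N : ℚ := Algebra.norm ℚ πK with hN
    have hcard : Fintype.card ((IntermediateField.adjoin ℚ {π}) →ₐ[ℚ] ℂ) = 4 := by
      rw [AlgHom.card]; exact hdeg
    have hNprod : algebraMap ℚ ℂ N = ∏ σ : (IntermediateField.adjoin ℚ {π}) →ₐ[ℚ] ℂ, σ πK :=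
      Algebra.norm_eq_prod_embeddings ℚ ℂ πK
    have habs : |N| = (p : ℚ)^2 := by
      have h1 : ‖algebraMap ℚ ℂ N‖ = (p : ℝ)^2 := by
        rw [hNprod, norm_prod]
        rw [Finset.prod_congr rfl (fun σ _ => hweil σ.toRingHom)]
        rw [Finset.prod_const, Finset.card_univ, hcard]
        rw [show (4:ℕ) = 2*2 by norm_num, pow_mul, Real.sq_sqrt (by positivity)]
      have h2 : ‖algebraMap ℚ ℂ N‖ = |(N : ℝ)| := by
        rw [show algebraMap ℚ ℂ N = ((N:ℝ) : ℂ) by push_cast; rfl, Complex.norm_real, Real.norm_eq_abs]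
      rw [h2] at h1
      exact_mod_cast h1
    have hpb : N = (minpoly ℚ π).coeff 0 := by
      let pb := IntermediateField.adjoin.powerBasis hintQ
      have hgen' : pb.gen = πK := Subtype.ext rfl
      have h3 := Algebra.PowerBasis.norm_gen_eq_coeff_zero_minpoly pb
      have hdim : pb.dim = 4 := hmindeg
      have hmp : minpoly ℚ pb.gen = minpoly ℚ π :=
        (minpoly.algHom_eq (IntermediateField.adjoin ℚ {π}).val
          (Subtype.val_injective) pb.gen).symm
      erw [hmp] at h3
      rw [hdim, hgen'] at h3
      rw [hN]; norm_num at h3; exact h3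
    have hZQ : (minpoly ℚ π).coeff 0 = ((minpoly ℤ π).coeff 0 : ℚ) := by
      rw [minpoly.isIntegrallyClosed_eq_field_fractions' ℚ hint, coeff_map]
      rfl
    rw [← hZQ, ← hpb]
    rcases abs_cases N with ⟨h, _⟩ | ⟨h, _⟩
    · left; rw [← h, habs]
    · right; rw [← habs]; linarith
  -- Step 2: `p·π̄ ∈ ℤ[π]`.
  have hpπb : (p : ℂ) * (starRingEnd ℂ) π ∈ Algebra.adjoin ℤ ({π} : Set ℂ) := by
    have hc' : (minpoly ℤ π).coeff 0 = (p:ℤ)^2 ∨ (minpoly ℤ π).coeff 0 = -(p:ℤ)^2 := by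
      rcases hc with h | h
      · left; exact_mod_cast h
      · right; exact_mod_cast h
    have h0 : (aeval π (minpoly ℤ π) : ℂ) = 0 := minpoly.aeval ℤ π
    have hsplit : π * aeval π (minpoly ℤ π).divX + (((minpoly ℤ π).coeff 0 : ℤ) : ℂ) = 0 := by
      rw [← h0]
      conv_rhs => rw [← X_mul_divX_add (minpoly ℤ π)]
      simp [mul_comm]
    have ht : aeval π (minpoly ℤ π).divX ∈ Algebra.adjoin ℤ ({π} : Set ℂ) := by
      rw [Algebra.adjoin_singleton_eq_range_aeval]; exact ⟨(minpoly ℤ π).divX, rfl⟩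
    rcases hc' with h | h
    · have key : π * ((p:ℂ) * (starRingEnd ℂ) π) = π * (-(aeval π (minpoly ℤ π).divX)) := by
        rw [h] at hsplit; push_cast at hsplit
        linear_combination (p:ℂ) * hnorm + hsplit
      rw [mul_left_cancel₀ hπ0 key]
      exact neg_mem ht
    · have key : π * ((p:ℂ) * (starRingEnd ℂ) π) = π * (aeval π (minpoly ℤ π).divX) := by
        rw [h] at hsplit; push_cast at hsplit
        linear_combination (p:ℂ) * hnorm - hsplit
      rw [mul_left_cancel₀ hπ0 key]
      exact ht
  -- Step 3: `β = π + π̄` has degree 2 over `ℚ`.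
  set β : ℂ := π + (starRingEnd ℂ) π with hβ
  have hπA : π ∈ Algebra.adjoin ℤ ({π} : Set ℂ) := Algebra.self_mem_adjoin_singleton ℤ π
  have hβK : β ∈ IntermediateField.adjoin ℚ {π} :=
    add_mem hπK (hstable π hπK)
  have hβim : β.im = 0 := by simp [hβ]
  have hβint : IsIntegral ℤ β :=
    hint.add (hint.map ((starRingEnd ℂ).toIntAlgHom))
  have hβQ : IsIntegral ℚ β := hβint.tower_top
  have hβA : β ∉ Algebra.adjoin ℤ ({π} : Set ℂ) := by
    intro h
    apply hnotin
    have := sub_mem h hπA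
    simpa [hβ] using this
  have hβ2 : (minpoly ℤ β).natDegree = 2 := by
    have hZQdeg : (minpoly ℤ β).natDegree = (minpoly ℚ β).natDegree := by
      rw [minpoly.isIntegrallyClosed_eq_field_fractions' ℚ hβint,
        (minpoly.monic hβint).natDegree_map]
    rw [hZQdeg]
    set d := (minpoly ℚ β).natDegree with hd
    have hβKint : IsIntegral ℚ (⟨β, hβK⟩ : IntermediateField.adjoin ℚ {π}) :=
      IsIntegral.of_finite ℚ _
    have hmpK : minpoly ℚ (⟨β, hβK⟩ : IntermediateField.adjoin ℚ {π}) = minpoly ℚ β :=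
      (minpoly.algHom_eq (IntermediateField.adjoin ℚ {π}).val Subtype.val_injective
        (⟨β, hβK⟩ : IntermediateField.adjoin ℚ {π})).symm
    have hdvd : d ∣ 4 := by
      have := minpoly.degree_dvd hβKint
      rw [hmpK, hdeg] at this
      exact this
    have hd1 : d ≠ 1 := by
      intro h
      rw [hd] at h
      rw [minpoly.natDegree_eq_one_iff] at h
      obtain ⟨r, hr⟩ := h
      have hrint : IsIntegral ℤ r := by
        refine IsIntegral.tower_bot (algebraMap ℚ ℂ).injective ?_
        rw [show algebraMap ℚ ℂ r = β from hr]
        exact hβint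
      obtain ⟨n, hn⟩ := IsIntegrallyClosed.isIntegral_iff.mp hrint
      apply hβA
      have : β = ((n : ℤ) : ℂ) := by
        rw [← hr, ← hn]; rfl
      rw [this]
      exact intCast_mem _ n
    have hd4 : d ≠ 4 := by
      intro h
      have hle : IntermediateField.adjoin ℚ {β} ≤ IntermediateField.adjoin ℚ {π} :=
        IntermediateField.adjoin_le_iff.mpr (Set.singleton_subset_iff.mpr hβK)
      have hfr : Module.finrank ℚ (IntermediateField.adjoin ℚ {β}) = 4 := by
        rw [IntermediateField.adjoin.finrank hβQ]; exact h
      have heq : IntermediateField.adjoin ℚ {β} = IntermediateField.adjoin ℚ {π} :=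
        IntermediateField.eq_of_le_of_finrank_eq hle (by rw [hfr, hdeg])
      have hreal : ∀ x : IntermediateField.adjoin ℚ {π}, (x : ℂ).im = 0 := by
        intro x
        have hx : (x : ℂ) ∈ IntermediateField.adjoin ℚ {β} := heq.symm.le x.2
        have hsub : IntermediateField.adjoin ℚ {β} ≤ realIF :=
          IntermediateField.adjoin_le_iff.mpr (Set.singleton_subset_iff.mpr (mem_realIF hβim))
        exact im_eq_zero_of_mem_realIF (hsub hx)
      exact himag.elim (real_hom_aux _ hreal).some
    have hdvd' : d ∣ 2 ^ 2 := by simpa using hdvd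
    obtain ⟨i, hi, hdi⟩ := (Nat.dvd_prime_pow Nat.prime_two).mp hdvd'
    interval_cases i <;> omega
  -- Step 4: quadratic relation for `β`.
  have hβsq : β * β = -(((minpoly ℤ β).coeff 1 : ℤ) : ℂ) * β - (((minpoly ℤ β).coeff 0 : ℤ) : ℂ) := by
    have h0 : (aeval β (minpoly ℤ β) : ℂ) = 0 := minpoly.aeval ℤ β
    rw [aeval_eq_sum_range' (n := 3) (by omega)] at h0
    rw [Finset.sum_range_succ, Finset.sum_range_succ, Finset.sum_range_one] at h0
    have hlead : (minpoly ℤ β).coeff 2 = 1 := by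
      have := (minpoly.monic hβint).coeff_natDegree
      rwa [hβ2] at this
    rw [hlead] at h0
    push_cast [zsmul_eq_mul] at h0
    linear_combination h0
  -- Step 5: `ℤ[π, π̄] = ℤ[π] + ℤ·β` as sets.
  set b1 : ℤ := (minpoly ℤ β).coeff 1
  set b0 : ℤ := (minpoly ℤ β).coeff 0
  have hchar : ∀ x, x ∈ Algebra.adjoin ℤ ({π, (starRingEnd ℂ) π} : Set ℂ) ↔
      ∃ a ∈ Algebra.adjoin ℤ ({π} : Set ℂ), ∃ n : ℤ, x = a + (n : ℂ) * β := by
    set A := Algebra.adjoin ℤ ({π} : Set ℂ) with hA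
    have hβπ : β * π = π * π + (p : ℂ) := by
      rw [hβ]; linear_combination hnorm
    have hmulβ : ∀ a ∈ A, ∃ b ∈ A, ∃ m : ℤ, β * a = b + (m : ℂ) * β := by
      intro a ha
      rw [hA, Algebra.adjoin_singleton_eq_range_aeval] at ha
      obtain ⟨r, rfl⟩ := ha
      have hra : (aeval π r : ℂ) = π * aeval π r.divX + ((r.coeff 0 : ℤ) : ℂ) := by
        conv_lhs => rw [← X_mul_divX_add r]
        simp [mul_comm]
      have htA : aeval π r.divX ∈ A := by
        rw [hA, Algebra.adjoin_singleton_eq_range_aeval]; exact ⟨r.divX, rfl⟩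
      refine ⟨(π * π + (p : ℂ)) * aeval π r.divX, ?_, r.coeff 0, ?_⟩
      · exact mul_mem (add_mem (mul_mem hπA hπA) (natCast_mem A p)) htA
      · show β * aeval π r = (π * π + (p : ℂ)) * aeval π r.divX + ((r.coeff 0 : ℤ) : ℂ) * β
        rw [hra]; linear_combination (aeval π r.divX) * hβπ
    set T : Subring ℂ :=
    { carrier := {x | ∃ a ∈ A, ∃ n : ℤ, x = a + (n : ℂ) * β}
      zero_mem' := ⟨0, zero_mem A, 0, by simp⟩
      one_mem' := ⟨1, one_mem A, 0, by simp⟩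
      add_mem' := by
        rintro x y ⟨a, ha, n, rfl⟩ ⟨b, hb, m, rfl⟩
        exact ⟨a + b, add_mem ha hb, n + m, by push_cast; ring⟩
      neg_mem' := by
        rintro x ⟨a, ha, n, rfl⟩
        exact ⟨-a, neg_mem ha, -n, by push_cast; ring⟩
      mul_mem' := by
        rintro x y ⟨a, ha, n, rfl⟩ ⟨b, hb, m, rfl⟩
        obtain ⟨a', ha', l, hla⟩ := hmulβ a ha
        obtain ⟨b', hb', k, hkb⟩ := hmulβ b hb
        refine ⟨a * b + (n : ℂ) * b' + (m : ℂ) * a' - ((n * m * b0 : ℤ) : ℂ), ?_,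
          n * k + m * l - n * m * b1, ?_⟩
        · exact sub_mem (add_mem (add_mem (mul_mem ha hb)
            (mul_mem (intCast_mem A n) hb')) (mul_mem (intCast_mem A m) ha'))
            (intCast_mem A _)
        · push_cast
          linear_combination (n : ℂ) * hkb + (m : ℂ) * hla + ((n : ℂ) * m) * hβsq } with hT
    intro x
    constructor
    · intro hx
      refine Algebra.adjoin_induction ?_ ?_ ?_ ?_ hx
      · intro y hy
        simp only [Set.mem_insert_iff, Set.mem_singleton_iff] at hy
        rcases hy with hy | hy
        · rw [hy]; exact ⟨π, hπA, 0, by simp⟩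
        · rw [hy]; exact ⟨-π, neg_mem hπA, 1, by rw [hβ]; push_cast; ring⟩
      · intro r
        exact ⟨(r : ℂ), intCast_mem A r, 0, by simp⟩
      · rintro y z - - hy hz
        exact T.add_mem hy hz
      · rintro y z - - hy hz
        exact T.mul_mem hy hz
    · rintro ⟨a, ha, n, rfl⟩
      have hsub : A ≤ Algebra.adjoin ℤ ({π, (starRingEnd ℂ) π} : Set ℂ) :=
        Algebra.adjoin_mono (by simp)
      have hβmem : β ∈ Algebra.adjoin ℤ ({π, (starRingEnd ℂ) π} : Set ℂ) := by
        rw [hβ]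
        exact add_mem (Algebra.subset_adjoin (by simp)) (Algebra.subset_adjoin (by simp))
      exact add_mem (hsub ha) (mul_mem (intCast_mem _ n) hβmem)
  -- Step 6: `p·β ∈ ℤ[π]`.
  have hpβ : (p : ℂ) * β ∈ Algebra.adjoin ℤ ({π} : Set ℂ) := by
    have : (p : ℂ) * β = (p : ℂ) * π + (p : ℂ) * (starRingEnd ℂ) π := by rw [hβ]; ring
    rw [this]
    exact add_mem (mul_mem (natCast_mem _ p) hπA) hpπb
  -- Step 7: index computation.
  set A := Algebra.adjoin ℤ ({π} : Set ℂ) with hA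
  set B := Algebra.adjoin ℤ ({π, (starRingEnd ℂ) π} : Set ℂ) with hB
  have hnd : ∀ n : ℤ, (n : ℂ) * β ∈ A ↔ (p : ℤ) ∣ n := by
    intro n
    constructor
    · intro h
      by_contra hndvd
      have hcop : IsCoprime (p : ℤ) n :=
        (_root_.Prime.coprime_iff_not_dvd (Nat.prime_iff_prime_int.mp hp)).mpr hndvd
      obtain ⟨u, v, huv⟩ := hcop
      apply hβA
      have h1 : ((u * p + v * n : ℤ) : ℂ) = 1 := by rw [huv]; simp
      have h2 : β = (u : ℂ) * ((p : ℂ) * β) + (v : ℂ) * ((n : ℂ) * β) := by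
        push_cast at h1; linear_combination β * h1.symm
      rw [hA, h2]
      exact add_mem (mul_mem (intCast_mem _ u) hpβ) (mul_mem (intCast_mem _ v) h)
    · rintro ⟨k, rfl⟩
      have : ((p * k : ℤ) : ℂ) * β = (k : ℂ) * ((p : ℂ) * β) := by push_cast; ring
      rw [this]
      exact mul_mem (intCast_mem _ k) hpβ
  set A' := A.toSubring.toAddSubgroup with hA'
  set B' := B.toSubring.toAddSubgroup with hB'
  have hβB : ∀ n : ℤ, (n : ℂ) * β ∈ B' := fun n =>
    (hchar _).mpr ⟨0, zero_mem _, n, by simp⟩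
  set H := A'.addSubgroupOf B' with hH
  set g : ℤ →+ B' ⧸ H :=
  { toFun := fun n => QuotientAddGroup.mk ⟨(n : ℂ) * β, hβB n⟩
    map_zero' := by
      rw [← QuotientAddGroup.mk_zero]
      refine congrArg QuotientAddGroup.mk (Subtype.ext ?_)
      push_cast
      ring
    map_add' := fun n m => by
      rw [← QuotientAddGroup.mk_add]
      refine congrArg QuotientAddGroup.mk (Subtype.ext ?_)
      push_cast
      ring } with hg
  have hsurj : Function.Surjective g := by
    intro q
    obtain ⟨x, rfl⟩ := QuotientAddGroup.mk_surjective q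
    obtain ⟨a, ha, n, hx⟩ := (hchar x.1).mp x.2
    refine ⟨n, ?_⟩
    show QuotientAddGroup.mk _ = QuotientAddGroup.mk x
    rw [QuotientAddGroup.eq]
    rw [AddSubgroup.mem_addSubgroupOf]
    show -((n : ℂ) * β) + x.1 ∈ A'
    have heq : -((n : ℂ) * β) + x.1 = a := by rw [hx]; ring
    rw [heq]
    exact ha
  have hker : g.ker = AddSubgroup.zmultiples (p : ℤ) := by
    ext n
    rw [AddMonoidHom.mem_ker, Int.mem_zmultiples_iff]
    have hgn : g n = QuotientAddGroup.mk ⟨(n : ℂ) * β, hβB n⟩ := rfl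
    rw [hgn, QuotientAddGroup.eq_zero_iff, AddSubgroup.mem_addSubgroupOf]
    exact hnd n
  calc A'.relIndex B' = H.index := rfl
    _ = Nat.card (B' ⧸ H) := rfl
    _ = Nat.card (ℤ ⧸ g.ker) :=
        (Nat.card_congr (QuotientAddGroup.quotientKerEquivOfSurjective g hsurj).toEquiv).symm
    _ = (AddSubgroup.zmultiples (p : ℤ)).index := by rw [hker]; rfl
    _ = p := by rw [Int.index_zmultiples]; simp
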